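/- Let X be a real M×N matrix with singular value decomposition X = U D Vᵀ, where P = min(M,N), U is M×P and V is N×P with orthonormal columns (UᵀU = I_P, VᵀV = I_P), and D is a P×P diagonal matrix with nonnegative diagonal entries. Fix λ ≥ 0 and let D̃ be the diagonal matrix with D̃[r,r] = max(D[r,r] − λ, 0). Then the matrix A* = U D̃ Vᵀ minimizes the function A ↦ ½‖X − A‖_F² + λ‖A‖_* over all real M×N matrices A; that is, ½‖X − A*‖_F² + λ‖A*‖_* ≤ ½‖X − A‖_F² + λ‖A‖_* for every A. (Proposition 2: soft-thresholded SVD solves the nuclear-norm-penalized approximation problem.) -/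

import Mathlib

open Matrix BigOperators

/-- The nuclear norm of a real matrix: the sum of its singular values, i.e. the sum of
the square roots of the (nonnegative real) eigenvalues of `Aᵀ * A` (= `Aᴴ * A` over `ℝ`). -/
noncomputable def nuclearNorm {M N : ℕ} (A : Matrix (Fin M) (Fin N) ℝ) : ℝ :=
  ∑ i, Real.sqrt ((Matrix.isHermitian_conjTranspose_mul_self A).eigenvalues i)

/-- Squared Frobenius norm: sum of squared entries. -/
noncomputable def frobSq {M N : ℕ} (A : Matrix (Fin M) (Fin N) ℝ) : ℝ :=
  ∑ m, ∑ n, (A m n) ^ 2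

lemma spectral_package {N : ℕ} (H : Matrix (Fin N) (Fin N) ℝ) (hH : H.IsHermitian) :
    ∃ W : Matrix (Fin N) (Fin N) ℝ,
      Wᵀ * W = 1 ∧ W * Wᵀ = 1 ∧ H * W = W * Matrix.diagonal hH.eigenvalues := by
  set W : Matrix (Fin N) (Fin N) ℝ := (hH.eigenvectorUnitary : Matrix (Fin N) (Fin N) ℝ) with hWdef
  have hmem := hH.eigenvectorUnitary.2
  rw [Unitary.mem_iff] at hmem
  have h1 : Wᵀ * W = 1 := by
    have := hmem.1
    rwa [Matrix.star_eq_conjTranspose, Matrix.conjTranspose_eq_transpose_of_trivial] at this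
  have h2 : W * Wᵀ = 1 := by
    have := hmem.2
    rwa [Matrix.star_eq_conjTranspose, Matrix.conjTranspose_eq_transpose_of_trivial] at this
  refine ⟨W, h1, h2, ?_⟩
  have hs : H = W * Matrix.diagonal hH.eigenvalues * Wᵀ := by
    have := hH.spectral_theorem
    simpa [Matrix.star_eq_conjTranspose, Matrix.conjTranspose_eq_transpose_of_trivial,
      Function.comp] using this
  have h4 := congrArg (fun M => M * W) hs
  simp only [Matrix.mul_assoc] at h4
  rw [h1, Matrix.mul_one] at h4
  simpa [Matrix.mul_assoc] using h4

lemma proj_bound {N P : ℕ} (V : Matrix (Fin N) (Fin P) ℝ) (hV : Vᵀ * V = 1)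
    (x : Fin N → ℝ) : ∑ r, ((Vᵀ *ᵥ x) r) ^ 2 ≤ ∑ n, (x n) ^ 2 := by
  set y := Vᵀ *ᵥ x with hy
  set v := V *ᵥ y with hv
  have hyy : ∑ r, (y r) ^ 2 = y ⬝ᵥ y := by simp [dotProduct, sq]
  have hVy : v ⬝ᵥ v = y ⬝ᵥ y := by
    rw [hv, Matrix.dotProduct_mulVec, ← Matrix.mulVec_transpose, Matrix.mulVec_mulVec, hV,
      Matrix.one_mulVec]
  have hxVy : x ⬝ᵥ v = y ⬝ᵥ y := by
    rw [hv, Matrix.dotProduct_mulVec, ← Matrix.mulVec_transpose, ← hy]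
  have hnn : 0 ≤ ∑ n, (x n - v n) ^ 2 := Finset.sum_nonneg fun n _ => sq_nonneg _
  have hexp : ∑ n, (x n - v n) ^ 2
      = (∑ n, (x n) ^ 2) - 2 * (x ⬝ᵥ v) + v ⬝ᵥ v := by
    simp only [dotProduct, Finset.mul_sum, ← Finset.sum_sub_distrib, ← Finset.sum_add_distrib]
    exact Finset.sum_congr rfl fun n _ => by ring
  rw [hexp, hxVy, hVy] at hnn
  rw [hyy]
  linarith
lemma dual_bound {M N P : ℕ} (U : Matrix (Fin M) (Fin P) ℝ) (V : Matrix (Fin N) (Fin P) ℝ)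
    (hU : Uᵀ * U = 1) (hV : Vᵀ * V = 1) (c : Fin P → ℝ) (lam : ℝ) (hlam : 0 ≤ lam)
    (hc0 : ∀ r, 0 ≤ c r) (hc1 : ∀ r, c r ≤ lam) (A : Matrix (Fin M) (Fin N) ℝ) :
    ∑ m, ∑ n, (U * Matrix.diagonal c * Vᵀ) m n * A m n ≤ lam * nuclearNorm A := by
  have hH : (Aᵀ * A).IsHermitian := Matrix.isHermitian_conjTranspose_mul_self A
  obtain ⟨W, hW1, hW2, hHW⟩ := spectral_package (Aᵀ * A) hH
  set μ : Fin N → ℝ := hH.eigenvalues with hμ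
  set K : Matrix (Fin P) (Fin N) ℝ := Uᵀ * A * W with hK
  set L : Matrix (Fin P) (Fin N) ℝ := Vᵀ * W with hL
  -- Step A: LHS = ∑ r, c r * (Uᵀ * A * V) r r
  have stepA : (∑ m, ∑ n, (U * Matrix.diagonal c * Vᵀ) m n * A m n)
      = ∑ r, c r * (Uᵀ * A * V) r r := by
    have e1 : (∑ m, ∑ n, (U * Matrix.diagonal c * Vᵀ) m n * A m n)
        = Matrix.trace ((U * Matrix.diagonal c * Vᵀ)ᵀ * A) := by
      simp only [Matrix.trace, Matrix.diag_apply, Matrix.mul_apply, Matrix.transpose_apply]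
      rw [Finset.sum_comm]
    have e2 : (U * Matrix.diagonal c * Vᵀ)ᵀ * A = V * (Matrix.diagonal c * Uᵀ * A) := by
      rw [Matrix.transpose_mul, Matrix.transpose_mul, Matrix.transpose_transpose,
        Matrix.diagonal_transpose]
      simp [Matrix.mul_assoc]
    have e3 : Matrix.diagonal c * Uᵀ * A * V = Matrix.diagonal c * (Uᵀ * A * V) := by
      simp [Matrix.mul_assoc]
    rw [e1, e2, Matrix.trace_mul_comm, e3]
    simp only [Matrix.trace, Matrix.diag_apply, Matrix.mul_apply, Matrix.diagonal_apply,
      ite_mul, zero_mul, Finset.sum_ite_eq, Finset.mem_univ, if_true]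
  -- Step B
  have hG : K * Lᵀ = Uᵀ * A * V := by
    rw [hK, hL, Matrix.transpose_mul, Matrix.transpose_transpose]
    calc Uᵀ * A * W * (Wᵀ * V) = Uᵀ * A * (W * Wᵀ) * V := by simp only [Matrix.mul_assoc]
      _ = Uᵀ * A * V := by rw [hW2, Matrix.mul_one]
  have stepB : ∀ r, (Uᵀ * A * V) r r = ∑ i, K r i * L r i := by
    intro r
    rw [← hG]
    simp [Matrix.mul_apply, Matrix.transpose_apply]
  -- diag identity
  have hHW' : Aᵀ * (A * W) = W * Matrix.diagonal μ := by
    rw [← Matrix.mul_assoc]; exact hHW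
  have hAW : (A * W)ᵀ * (A * W) = Matrix.diagonal μ := by
    rw [Matrix.transpose_mul]
    calc Wᵀ * Aᵀ * (A * W) = Wᵀ * (Aᵀ * (A * W)) := by rw [Matrix.mul_assoc]
      _ = Wᵀ * (W * Matrix.diagonal μ) := by rw [hHW']
      _ = Wᵀ * W * Matrix.diagonal μ := by rw [Matrix.mul_assoc]
      _ = Matrix.diagonal μ := by rw [hW1, Matrix.one_mul]
  -- Step C bounds
  have hKb : ∀ i, (∑ r, (K r i) ^ 2) ≤ μ i := by
    intro i
    have h1 : ∀ r, K r i = (Uᵀ *ᵥ (fun m => (A * W) m i)) r := by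
      intro r
      rw [hK, Matrix.mul_assoc]
      simp [Matrix.mul_apply, Matrix.mulVec, dotProduct, Matrix.transpose_apply]
    have h2 : (∑ r, (K r i) ^ 2) ≤ ∑ m, ((A * W) m i) ^ 2 := by
      simp only [h1]
      exact proj_bound U hU _
    have h3 : (∑ m, ((A * W) m i) ^ 2) = μ i := by
      have := congrArg (fun B => B i i) hAW
      simpa [Matrix.mul_apply, Matrix.transpose_apply, Matrix.diagonal_apply, sq, mul_comm]
        using this
    linarith
  have hLb : ∀ i, (∑ r, (L r i) ^ 2) ≤ 1 := by
    intro i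
    have h1 : ∀ r, L r i = (Vᵀ *ᵥ (fun n => W n i)) r := by
      intro r
      rw [hL]
      simp [Matrix.mul_apply, Matrix.mulVec, dotProduct, Matrix.transpose_apply]
    have h2 : (∑ r, (L r i) ^ 2) ≤ ∑ n, (W n i) ^ 2 := by
      simp only [h1]
      exact proj_bound V hV _
    have h3 : (∑ n, (W n i) ^ 2) = 1 := by
      have := congrArg (fun B => B i i) hW1
      simpa [Matrix.mul_apply, Matrix.transpose_apply, Matrix.one_apply, sq] using this
    linarith
  have μnn : ∀ i, 0 ≤ μ i := fun i => Matrix.eigenvalues_conjTranspose_mul_self_nonneg A i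
  have perI : ∀ i, (∑ r, c r * (K r i * L r i)) ≤ lam * Real.sqrt (μ i) := by
    intro i
    have s1 : (∑ r, c r * (K r i * L r i)) ≤ lam * ∑ r, |K r i| * |L r i| := by
      rw [Finset.mul_sum]
      refine Finset.sum_le_sum fun r _ => ?_
      have h1 : c r * (K r i * L r i) ≤ c r * |K r i * L r i| :=
        mul_le_mul_of_nonneg_left (le_abs_self _) (hc0 r)
      have h2 : c r * |K r i * L r i| ≤ lam * |K r i * L r i| :=
        mul_le_mul_of_nonneg_right (hc1 r) (abs_nonneg _)
      rw [abs_mul] at h1 h2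
      linarith
    have s2 : (∑ r, |K r i| * |L r i|)
        ≤ Real.sqrt (∑ r, (K r i) ^ 2) * Real.sqrt (∑ r, (L r i) ^ 2) := by
      have cs := Finset.sum_mul_sq_le_sq_mul_sq Finset.univ (fun r => |K r i|) (fun r => |L r i|)
      simp only [sq_abs] at cs
      have hnn : 0 ≤ ∑ r, |K r i| * |L r i| :=
        Finset.sum_nonneg fun r _ => mul_nonneg (abs_nonneg _) (abs_nonneg _)
      have := Real.sqrt_le_sqrt cs
      rwa [Real.sqrt_sq hnn, Real.sqrt_mul (Finset.sum_nonneg fun r _ => sq_nonneg _)] at this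
    have s3 : Real.sqrt (∑ r, (K r i) ^ 2) ≤ Real.sqrt (μ i) := Real.sqrt_le_sqrt (hKb i)
    have s4 : Real.sqrt (∑ r, (L r i) ^ 2) ≤ 1 := by
      have := Real.sqrt_le_sqrt (hLb i)
      simpa using this
    have s5 : Real.sqrt (∑ r, (K r i) ^ 2) * Real.sqrt (∑ r, (L r i) ^ 2)
        ≤ Real.sqrt (μ i) * 1 :=
      mul_le_mul s3 s4 (Real.sqrt_nonneg _) (Real.sqrt_nonneg _)
    calc (∑ r, c r * (K r i * L r i)) ≤ lam * ∑ r, |K r i| * |L r i| := s1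
      _ ≤ lam * (Real.sqrt (∑ r, (K r i) ^ 2) * Real.sqrt (∑ r, (L r i) ^ 2)) :=
          mul_le_mul_of_nonneg_left s2 hlam
      _ ≤ lam * (Real.sqrt (μ i) * 1) := mul_le_mul_of_nonneg_left s5 hlam
      _ = lam * Real.sqrt (μ i) := by ring
  calc (∑ m, ∑ n, (U * Matrix.diagonal c * Vᵀ) m n * A m n)
      = ∑ r, c r * ∑ i, K r i * L r i := by
        rw [stepA]; exact Finset.sum_congr rfl fun r _ => by rw [stepB r]
    _ = ∑ i, ∑ r, c r * (K r i * L r i) := by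
        simp only [Finset.mul_sum]; rw [Finset.sum_comm]
    _ ≤ ∑ i, lam * Real.sqrt (μ i) := Finset.sum_le_sum fun i _ => perI i
    _ = lam * nuclearNorm A := by rw [nuclearNorm, ← Finset.mul_sum]; rfl
lemma nuclear_le {M N P : ℕ} (U : Matrix (Fin M) (Fin P) ℝ) (V : Matrix (Fin N) (Fin P) ℝ)
    (hU : Uᵀ * U = 1) (hV : Vᵀ * V = 1) (S : Fin P → ℝ) (hS : ∀ r, 0 ≤ S r) :
    nuclearNorm (U * Matrix.diagonal S * Vᵀ) ≤ ∑ r, S r := by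
  set A : Matrix (Fin M) (Fin N) ℝ := U * Matrix.diagonal S * Vᵀ with hA
  set ss : Fin P → ℝ := fun r => S r * S r with hss
  have hH : (Aᵀ * A).IsHermitian := Matrix.isHermitian_conjTranspose_mul_self A
  obtain ⟨W, hW1, hW2, hHW⟩ := spectral_package (Aᵀ * A) hH
  set μ : Fin N → ℝ := hH.eigenvalues with hμ
  set Z : Matrix (Fin P) (Fin N) ℝ := Vᵀ * W with hZ
  have hAT : Aᵀ = V * Matrix.diagonal S * Uᵀ := by
    rw [hA, Matrix.transpose_mul, Matrix.transpose_mul, Matrix.transpose_transpose,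
      Matrix.diagonal_transpose, Matrix.mul_assoc]
  have hstruct : Aᵀ * A = V * Matrix.diagonal ss * Vᵀ := by
    rw [hAT]
    conv_lhs => rw [hA]
    calc V * Matrix.diagonal S * Uᵀ * (U * Matrix.diagonal S * Vᵀ)
        = V * (Matrix.diagonal S * ((Uᵀ * U) * (Matrix.diagonal S * Vᵀ))) := by
          simp only [Matrix.mul_assoc]
      _ = V * (Matrix.diagonal S * (Matrix.diagonal S * Vᵀ)) := by rw [hU, Matrix.one_mul]
      _ = V * ((Matrix.diagonal S * Matrix.diagonal S) * Vᵀ) := by rw [Matrix.mul_assoc]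
      _ = V * Matrix.diagonal ss * Vᵀ := by
          rw [Matrix.diagonal_mul_diagonal, Matrix.mul_assoc]
  have key1 : Zᵀ * (Matrix.diagonal ss * Z) = Matrix.diagonal μ := by
    have e1 : Zᵀ * (Matrix.diagonal ss * Z) = Wᵀ * (Aᵀ * A * W) := by
      rw [hstruct, hZ, Matrix.transpose_mul, Matrix.transpose_transpose]
      simp only [Matrix.mul_assoc]
    rw [e1, hHW, ← Matrix.mul_assoc, hW1, Matrix.one_mul]
  have key2 : Matrix.diagonal ss * Z = Z * Matrix.diagonal μ := by
    have e := congrArg (fun B => Vᵀ * B) hHW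
    have e1 : Vᵀ * (Aᵀ * A * W) = Matrix.diagonal ss * Z := by
      rw [hstruct, hZ]
      simp only [Matrix.mul_assoc]
      rw [← Matrix.mul_assoc Vᵀ V, hV, Matrix.one_mul]
    have e2 : Vᵀ * (W * Matrix.diagonal μ) = Z * Matrix.diagonal μ := by
      rw [hZ, Matrix.mul_assoc]
    rw [e1, e2] at e
    exact e
  have hZZ : Z * Zᵀ = 1 := by
    rw [hZ, Matrix.transpose_mul, Matrix.transpose_transpose]
    calc Vᵀ * W * (Wᵀ * V) = Vᵀ * (W * Wᵀ) * V := by simp only [Matrix.mul_assoc]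
      _ = Vᵀ * V := by rw [hW2, Matrix.mul_one]
      _ = 1 := hV
  have diagA : ∀ i, μ i = ∑ r, ss r * (Z r i) ^ 2 := by
    intro i
    have h := congrArg (fun B => B i i) key1
    simp only [Matrix.mul_apply, Matrix.transpose_apply, Matrix.diagonal_apply, ite_mul,
      zero_mul, Finset.sum_ite_eq, Finset.mem_univ, if_true] at h
    rw [← h]
    exact Finset.sum_congr rfl fun r _ => by ring
  have diagB : ∀ r i, ss r * Z r i = Z r i * μ i := by
    intro r i
    have h := congrArg (fun B => B r i) key2
    simpa [Matrix.diagonal_mul, Matrix.mul_diagonal] using h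
  have rowsum : ∀ r, (∑ i, (Z r i) ^ 2) = 1 := by
    intro r
    have := congrArg (fun B => B r r) hZZ
    simpa [Matrix.mul_apply, Matrix.transpose_apply, Matrix.one_apply, sq] using this
  have μnn : ∀ i, 0 ≤ μ i := fun i => Matrix.eigenvalues_conjTranspose_mul_self_nonneg A i
  have perI : ∀ i, Real.sqrt (μ i) ≤ ∑ r, S r * (Z r i) ^ 2 := by
    intro i
    rcases eq_or_lt_of_le (μnn i) with h0 | hpos
    · rw [← h0, Real.sqrt_zero]
      exact Finset.sum_nonneg fun r _ => mul_nonneg (hS r) (sq_nonneg _)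
    · have hb : ∀ r, ss r * (Z r i) ^ 2 = μ i * (Z r i) ^ 2 := by
        intro r
        have := congrArg (fun t => t * Z r i) (diagB r i)
        calc ss r * Z r i ^ 2 = ss r * Z r i * Z r i := by ring
          _ = Z r i * μ i * Z r i := by rw [diagB r i]
          _ = μ i * Z r i ^ 2 := by ring
      have hsum1 : (∑ r, (Z r i) ^ 2) = 1 := by
        have e1 : (∑ r, ss r * (Z r i) ^ 2) = μ i * ∑ r, (Z r i) ^ 2 := by
          rw [Finset.mul_sum]
          exact Finset.sum_congr rfl fun r _ => hb r
        have e2 : μ i * 1 = μ i * ∑ r, (Z r i) ^ 2 := by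
          rw [mul_one]; exact (diagA i).trans e1
        exact (mul_left_cancel₀ (ne_of_gt hpos) e2).symm
      have expand : Real.sqrt (μ i) = ∑ r, Real.sqrt (μ i) * (Z r i) ^ 2 := by
        rw [← Finset.mul_sum, hsum1, mul_one]
      rw [expand]
      refine le_of_eq (Finset.sum_congr rfl fun r _ => ?_)
      by_cases hz : Z r i = 0
      · simp [hz]
      · have h2 : ss r = μ i := by
          have := hb r
          have hz2 : (Z r i) ^ 2 ≠ 0 := pow_ne_zero _ hz
          exact mul_right_cancel₀ hz2 this
        rw [← h2, hss]
        simp only []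
        rw [Real.sqrt_mul_self (hS r)]
  have final : nuclearNorm A = ∑ i, Real.sqrt (μ i) := rfl
  calc nuclearNorm A = ∑ i, Real.sqrt (μ i) := final
    _ ≤ ∑ i, ∑ r, S r * (Z r i) ^ 2 := Finset.sum_le_sum fun i _ => perI i
    _ = ∑ r, S r * ∑ i, (Z r i) ^ 2 := by
        rw [Finset.sum_comm]
        exact Finset.sum_congr rfl fun r _ => by rw [Finset.mul_sum]
    _ = ∑ r, S r := by
        exact Finset.sum_congr rfl fun r _ => by rw [rowsum r, mul_one]
lemma ip_eq {M N P : ℕ} (U : Matrix (Fin M) (Fin P) ℝ) (V : Matrix (Fin N) (Fin P) ℝ)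
    (hU : Uᵀ * U = 1) (hV : Vᵀ * V = 1) (c S : Fin P → ℝ) :
    ∑ m, ∑ n, (U * Matrix.diagonal c * Vᵀ) m n * (U * Matrix.diagonal S * Vᵀ) m n
      = ∑ r, c r * S r := by
  have e1 : (∑ m, ∑ n, (U * Matrix.diagonal c * Vᵀ) m n * (U * Matrix.diagonal S * Vᵀ) m n)
      = Matrix.trace ((U * Matrix.diagonal c * Vᵀ)ᵀ * (U * Matrix.diagonal S * Vᵀ)) := by
    simp only [Matrix.trace, Matrix.diag_apply, Matrix.mul_apply, Matrix.transpose_apply]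
    rw [Finset.sum_comm]
  have e2 : (U * Matrix.diagonal c * Vᵀ)ᵀ * (U * Matrix.diagonal S * Vᵀ)
      = V * (Matrix.diagonal (fun r => c r * S r) * Vᵀ) := by
    rw [Matrix.transpose_mul, Matrix.transpose_mul, Matrix.transpose_transpose,
      Matrix.diagonal_transpose]
    simp only [Matrix.mul_assoc]
    rw [← Matrix.mul_assoc Uᵀ U, hU, Matrix.one_mul,
      ← Matrix.mul_assoc (Matrix.diagonal c) (Matrix.diagonal S) Vᵀ,
      Matrix.diagonal_mul_diagonal]
  rw [e1, e2, ← Matrix.mul_assoc, Matrix.trace_mul_comm, ← Matrix.mul_assoc, hV, Matrix.one_mul,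
    Matrix.trace_diagonal]

lemma frob_expand {M N : ℕ} (B C : Matrix (Fin M) (Fin N) ℝ) :
    frobSq (B - C) = frobSq B - 2 * (∑ m, ∑ n, B m n * C m n) + frobSq C := by
  simp only [frobSq, Matrix.sub_apply, Finset.mul_sum, ← Finset.sum_sub_distrib,
    ← Finset.sum_add_distrib]
  exact Finset.sum_congr rfl fun m _ => Finset.sum_congr rfl fun n _ => by ring

/-- Proposition 2 (soft-thresholded SVD): if `X = U D Vᵀ` is a singular value decomposition
of `X` (with `P = min M N`, `U`, `V` having orthonormal columns and `D` diagonal with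
nonnegative entries), then `A* = U D̃ Vᵀ`, where `D̃[r,r] = max (D[r,r] − λ) 0`, minimizes
`A ↦ ½‖X − A‖_F² + λ‖A‖_*` over all real `M × N` matrices. -/
theorem soft_threshold_svd_minimizes_nuclear_penalized
    {M N : ℕ}
    (X : Matrix (Fin M) (Fin N) ℝ)
    (U : Matrix (Fin M) (Fin (min M N)) ℝ)
    (V : Matrix (Fin N) (Fin (min M N)) ℝ)
    (D : Matrix (Fin (min M N)) (Fin (min M N)) ℝ)
    (hU : Uᵀ * U = 1) (hV : Vᵀ * V = 1)
    (hDdiag : ∀ r s, r ≠ s → D r s = 0) (hDnonneg : ∀ r, 0 ≤ D r r)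
    (hX : X = U * D * Vᵀ)
    (lam : ℝ) (hlam : 0 ≤ lam) :
    ∀ A : Matrix (Fin M) (Fin N) ℝ,
      (1 / 2) * frobSq (X - U * (Matrix.diagonal fun r => max (D r r - lam) 0) * Vᵀ)
          + lam * nuclearNorm (U * (Matrix.diagonal fun r => max (D r r - lam) 0) * Vᵀ)
        ≤ (1 / 2) * frobSq (X - A) + lam * nuclearNorm A := by
  intro A
  set S : Fin (min M N) → ℝ := fun r => max (D r r - lam) 0 with hSdef
  set c : Fin (min M N) → ℝ := fun r => D r r - S r with hcdef
  have hS0 : ∀ r, 0 ≤ S r := fun r => le_max_right _ _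
  have hc0 : ∀ r, 0 ≤ c r := by
    intro r
    rcases le_total (D r r) lam with h | h
    · have : S r = 0 := max_eq_right (by linarith)
      simp [hcdef, this, hDnonneg r]
    · have : S r = D r r - lam := max_eq_left (by linarith)
      simp [hcdef, this]
      linarith
  have hc1 : ∀ r, c r ≤ lam := by
    intro r
    rcases le_total (D r r) lam with h | h
    · have : S r = 0 := max_eq_right (by linarith)
      simp [hcdef, this]
      linarith
    · have : S r = D r r - lam := max_eq_left (by linarith)
      simp [hcdef, this]
  have hcS : ∀ r, c r * S r = lam * S r := by
    intro r
    rcases le_total (D r r) lam with h | h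
    · have h0 : S r = 0 := max_eq_right (by linarith)
      simp [h0]
    · have h0 : S r = D r r - lam := max_eq_left (by linarith)
      simp [hcdef, h0]
  -- structure of X - A*
  have hDeq : D = Matrix.diagonal fun r => D r r := by
    ext r s
    by_cases h : r = s
    · subst h; simp
    · simp [Matrix.diagonal_apply_ne _ h, hDdiag r s h]
  set Astar : Matrix (Fin M) (Fin N) ℝ := U * Matrix.diagonal S * Vᵀ with hAstar
  set B : Matrix (Fin M) (Fin N) ℝ := U * Matrix.diagonal c * Vᵀ with hBdef
  have hB : X - Astar = B := by
    rw [hX, hAstar, hBdef]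
    conv_lhs => rw [hDeq]
    rw [← Matrix.sub_mul, ← Matrix.mul_sub, Matrix.diagonal_sub]
  set CC : Matrix (Fin M) (Fin N) ℝ := A - Astar with hCC
  have hXA : X - A = B - CC := by
    rw [← hB, hCC]
    abel
  -- quantities
  have hfrob : frobSq (X - A)
      = frobSq B - 2 * (∑ m, ∑ n, B m n * CC m n) + frobSq CC := by
    rw [hXA]; exact frob_expand B CC
  have hsplit : (∑ m, ∑ n, B m n * CC m n)
      = (∑ m, ∑ n, B m n * A m n) - (∑ m, ∑ n, B m n * Astar m n) := by
    simp only [hCC, Matrix.sub_apply, mul_sub, Finset.sum_sub_distrib]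
  have hTstar : (∑ m, ∑ n, B m n * Astar m n) = lam * ∑ r, S r := by
    rw [hBdef, hAstar, ip_eq U V hU hV c S, Finset.mul_sum]
    exact Finset.sum_congr rfl fun r _ => hcS r
  have hdual : (∑ m, ∑ n, B m n * A m n) ≤ lam * nuclearNorm A := by
    rw [hBdef]
    exact dual_bound U V hU hV c lam hlam hc0 hc1 A
  have hnuc : nuclearNorm Astar ≤ ∑ r, S r := by
    rw [hAstar]
    exact nuclear_le U V hU hV S hS0
  have hnuc' : lam * nuclearNorm Astar ≤ lam * ∑ r, S r :=
    mul_le_mul_of_nonneg_left hnuc hlam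
  have hCnn : 0 ≤ frobSq CC :=
    Finset.sum_nonneg fun m _ => Finset.sum_nonneg fun n _ => sq_nonneg _
  have hgoalB : frobSq (X - Astar) = frobSq B := by rw [hB]
  rw [hgoalB, hfrob]
  linarith
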